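/- Under Assumption (A), there exist ε > 0 and C > 0 with the following property: if x_k ∈ 𝔹 and d_k ∈ E are sequences such that each d_k is a Newton direction at x_k, x_{k+1} = (x_k + d_k)/‖x_k + d_k‖ for all k, and ‖x_0 − x̄‖ ≤ ε, then ‖x_{k+1} − x̄‖ ≤ C ‖x_k − x̄‖² for all k, and the sequence {x_k} converges to x̄ (quadratically). -/

import Mathlib

open scoped RealInnerProductSpace

noncomputable section

/-- Euclidean space `ℝ^n`. -/
abbrev Euc (n : ℕ) : Type := EuclideanSpace ℝ (Fin n)

/-- An `m`-th order tensor on `ℝ^n`, viewed as a continuous `m`-multilinear form. -/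
abbrev Tensor (m n : ℕ) : Type := ContinuousMultilinearMap ℝ (fun _ : Fin m => Euc n) ℝ

/-- A tensor is symmetric if it is invariant under every permutation of its arguments. -/
def IsSymmTensor {m n : ℕ} (A : Tensor m n) : Prop :=
  ∀ (e : Equiv.Perm (Fin m)) (v : Fin m → Euc n), A (v ∘ e) = A v

/-- `A x^m`, the homogeneous form `A (x, …, x)`. -/
def tpow {m n : ℕ} (A : Tensor m n) (x : Euc n) : ℝ := A (fun _ => x)

/-- The last index of `Fin m`. -/
def lastIdx {m : ℕ} (_hm : 2 ≤ m) : Fin m := ⟨m - 1, by omega⟩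

/-- The second to last index of `Fin m`. -/
def sndIdx {m : ℕ} (_hm : 2 ≤ m) : Fin m := ⟨m - 2, by omega⟩

lemma sndIdx_ne_lastIdx {m : ℕ} (hm : 2 ≤ m) : sndIdx hm ≠ lastIdx hm := by
  simp only [sndIdx, lastIdx, Fin.mk.injEq, ne_eq]
  omega

/-- `A x^{m-1}`: the unique vector with `⟪A x^{m-1}, v⟫ = A (x, …, x, v)` for all `v`. -/
def tvec {m n : ℕ} (A : Tensor m n) (hm : 2 ≤ m) (x : Euc n) : Euc n :=
  (InnerProductSpace.toDual ℝ (Euc n)).symm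
    (A.toContinuousLinearMap (fun _ => x) (lastIdx hm))

/-- `F(x) = A x^{m-1} - (A x^m) • x`. -/
def Fvec {m n : ℕ} (A : Tensor m n) (hm : 2 ≤ m) (x : Euc n) : Euc n :=
  tvec A hm x - tpow A x • x

/-- `φ(x) = (1/m) A x^m`. -/
def phi {m n : ℕ} (A : Tensor m n) (x : Euc n) : ℝ := (1 / (m : ℝ)) * tpow A x

/-- Orthogonal projection `P_x d = d - ⟪x, d⟫ x` (for `x` a unit vector). -/
def Pproj {n : ℕ} (x d : Euc n) : Euc n := d - ⟪x, d⟫ • x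

/-- `x(α) = (x + α d)/‖x + α d‖`, the projection of `x + α d` onto the unit sphere. -/
def xcur {n : ℕ} (x d : Euc n) (α : ℝ) : Euc n := ‖x + α • d‖⁻¹ • (x + α • d)

/-- `w(x, d)`: the unique vector with `⟪w(x, d), v⟫ = A (x, …, x, d, v)` for all `v`. -/
def wvec {m n : ℕ} (A : Tensor m n) (hm : 2 ≤ m) (x d : Euc n) : Euc n :=
  (InnerProductSpace.toDual ℝ (Euc n)).symm
    (A.toContinuousLinearMap (Function.update (fun _ => x) (sndIdx hm) d) (lastIdx hm))

/-- `A (x, …, x, d, d)`. -/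
def A2 {m n : ℕ} (A : Tensor m n) (hm : 2 ≤ m) (x d : Euc n) : ℝ :=
  A (Function.update (Function.update (fun _ => x) (sndIdx hm) d) (lastIdx hm) d)

lemma wvec_add {m n : ℕ} (A : Tensor m n) (hm : 2 ≤ m) (x d₁ d₂ : Euc n) :
    wvec A hm x (d₁ + d₂) = wvec A hm x d₁ + wvec A hm x d₂ := by
  unfold wvec
  rw [← map_add]
  congr 1
  ext v
  simp only [ContinuousMultilinearMap.toContinuousLinearMap_apply, ContinuousLinearMap.add_apply]
  rw [Function.update_comm (sndIdx_ne_lastIdx hm), Function.update_comm (sndIdx_ne_lastIdx hm),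
    Function.update_comm (sndIdx_ne_lastIdx hm)]
  exact A.map_update_add _ _ _ _

lemma wvec_smul {m n : ℕ} (A : Tensor m n) (hm : 2 ≤ m) (x : Euc n) (c : ℝ) (d : Euc n) :
    wvec A hm x (c • d) = c • wvec A hm x d := by
  unfold wvec
  rw [← map_smul]
  congr 1
  ext v
  simp only [ContinuousMultilinearMap.toContinuousLinearMap_apply,
    ContinuousLinearMap.smul_apply, smul_eq_mul]
  rw [Function.update_comm (sndIdx_ne_lastIdx hm), Function.update_comm (sndIdx_ne_lastIdx hm)]
  exact A.map_update_smul _ _ _ _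

/-- The Jacobian `F'(x) d = (m-1) w(x,d) - (A x^m) d - m ⟪A x^{m-1}, d⟫ x`. -/
def FderivL {m n : ℕ} (A : Tensor m n) (hm : 2 ≤ m) (x : Euc n) : Euc n →L[ℝ] Euc n :=
  LinearMap.toContinuousLinearMap
  { toFun := fun d =>
      ((m : ℝ) - 1) • wvec A hm x d - tpow A x • d - ((m : ℝ) * ⟪tvec A hm x, d⟫) • x
    map_add' := by
      intro d₁ d₂
      try simp only
      rw [wvec_add, inner_add_right]
      module
    map_smul' := by
      intro c d
      simp only [RingHom.id_apply]
      rw [wvec_smul, inner_smul_right]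
      module }

/-- A Newton direction at `x`: `⟪x, d⟫ = 0` and `P_x (F'(x) d + F(x)) = 0`. -/
def NewtonDir {m n : ℕ} (A : Tensor m n) (hm : 2 ≤ m) (x d : Euc n) : Prop :=
  ⟪x, d⟫ = 0 ∧ Pproj x (FderivL A hm x d + Fvec A hm x) = 0

/-- The residual function `θ(x) = (1/2)‖F(x)‖²`. -/
def theta {m n : ℕ} (A : Tensor m n) (hm : 2 ≤ m) (x : Euc n) : ℝ :=
  (1 / 2) * ‖Fvec A hm x‖ ^ 2

/-- Assumption (A): second-order sufficient condition at the KKT point `x̄`. -/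
def AssumpA {m n : ℕ} (A : Tensor m n) (hm : 2 ≤ m) (xb : Euc n) (lam : ℝ) : Prop :=
  ‖xb‖ = 1 ∧ tvec A hm xb = lam • xb ∧ lam = tpow A xb ∧
    ∀ d : Euc n, d ≠ 0 → ⟪xb, d⟫ = 0 →
      0 < ((m : ℝ) - 1) * A2 A hm xb d - lam * ‖d‖ ^ 2

end

noncomputable section AuxProof

open Function Finset

variable {m n : ℕ}

lemma inner_tvec (A : Tensor m n) (hm : 2 ≤ m) (x v : Euc n) :
    ⟪tvec A hm x, v⟫ = A (Function.update (fun _ => x) (lastIdx hm) v) := by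
  rw [tvec, InnerProductSpace.toDual_symm_apply,
    ContinuousMultilinearMap.toContinuousLinearMap_apply]

lemma inner_wvec (A : Tensor m n) (hm : 2 ≤ m) (x d v : Euc n) :
    ⟪wvec A hm x d, v⟫
      = A (Function.update (Function.update (fun _ => x) (sndIdx hm) d) (lastIdx hm) v) := by
  rw [wvec, InnerProductSpace.toDual_symm_apply,
    ContinuousMultilinearMap.toContinuousLinearMap_apply]

lemma inner_wvec_self (A : Tensor m n) (hm : 2 ≤ m) (x u : Euc n) :
    ⟪wvec A hm x u, u⟫ = A2 A hm x u := by
  rw [inner_wvec, A2]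

lemma update_comp_swap (x h : Euc n) (i j : Fin m) :
    (Function.update (fun _ => x) i h) ∘ (Equiv.swap i j) = Function.update (fun _ => x) j h := by
  funext k
  simp only [Function.comp_apply, Function.update_apply]
  have h1 : Equiv.swap i j k = i ↔ k = j := by
    rw [Equiv.apply_eq_iff_eq_symm_apply, Equiv.symm_swap, Equiv.swap_apply_left]
  rw [if_congr h1 rfl rfl]

lemma update2_comp_swap (x h v : Euc n) {i j l : Fin m} (hi : i ≠ l) (hj : j ≠ l) :
    (Function.update (Function.update (fun _ => x) i h) l v) ∘ (Equiv.swap i j)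
      = Function.update (Function.update (fun _ => x) j h) l v := by
  funext k
  simp only [Function.comp_apply, Function.update_apply]
  have h1 : Equiv.swap i j k = l ↔ k = l := by
    rw [Equiv.apply_eq_iff_eq_symm_apply, Equiv.symm_swap,
      Equiv.swap_apply_of_ne_of_ne hi.symm hj.symm]
  have h2 : Equiv.swap i j k = i ↔ k = j := by
    rw [Equiv.apply_eq_iff_eq_symm_apply, Equiv.symm_swap, Equiv.swap_apply_left]
  rw [if_congr h1 rfl (if_congr h2 rfl rfl)]

lemma A_update_eq {A : Tensor m n} (hA : IsSymmTensor A) (hm : 2 ≤ m) (x h : Euc n) (i : Fin m) :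
    A (Function.update (fun _ => x) i h) = ⟪tvec A hm x, h⟫ := by
  rw [inner_tvec, ← update_comp_swap x h (lastIdx hm) i, hA]

lemma A_update2_eq {A : Tensor m n} (hA : IsSymmTensor A) (hm : 2 ≤ m) (x h v : Euc n)
    {i : Fin m} (hi : i ≠ lastIdx hm) :
    A (Function.update (Function.update (fun _ => x) i h) (lastIdx hm) v)
      = ⟪wvec A hm x h, v⟫ := by
  rw [inner_wvec, ← update2_comp_swap x h v (sndIdx_ne_lastIdx hm) hi, hA]

lemma A2_smul (A : Tensor m n) (hm : 2 ≤ m) (x : Euc n) (c : ℝ) (u : Euc n) :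
    A2 A hm x (c • u) = c ^ 2 * A2 A hm x u := by
  unfold A2
  rw [A.map_update_smul, Function.update_comm (sndIdx_ne_lastIdx hm), A.map_update_smul,
    Function.update_comm (Ne.symm (sndIdx_ne_lastIdx hm)), smul_eq_mul, smul_eq_mul]
  ring

lemma A2_zero (A : Tensor m n) (hm : 2 ≤ m) (x : Euc n) : A2 A hm x 0 = 0 := by
  unfold A2
  exact A.map_update_zero _ _

end AuxProof

noncomputable section AuxProof2

variable {m n : ℕ}

lemma norm_le_of_inner_unit_le (q : Euc n) {c : ℝ} (hc : 0 ≤ c)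
    (h : ∀ w : Euc n, ‖w‖ = 1 → ⟪q, w⟫ ≤ c) : ‖q‖ ≤ c := by
  by_cases hq : q = 0
  · simpa [hq] using hc
  · have hnq : ‖q‖ ≠ 0 := norm_ne_zero_iff.2 hq
    have := h (‖q‖⁻¹ • q) (by rw [norm_smul]; simp [abs_of_nonneg, inv_mul_cancel₀ hnq])
    rwa [real_inner_smul_right, real_inner_self_eq_norm_sq, pow_two, ← mul_assoc,
      inv_mul_cancel₀ hnq, one_mul] at this

lemma tuple_norm_le {c : ℝ} (hc : 0 ≤ c) (t : Fin m → Euc n) (h : ∀ i, ‖t i‖ ≤ c) : ‖t‖ ≤ c :=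
  (pi_norm_le_iff_of_nonneg hc).2 h

lemma abs_tpow_le (A : Tensor m n) {x : Euc n} (hx : ‖x‖ ≤ 1) : |tpow A x| ≤ ‖A‖ := by
  have := A.le_opNorm (fun _ => x)
  rw [tpow]
  refine le_trans this ?_
  calc ‖A‖ * ∏ _i : Fin m, ‖x‖ ≤ ‖A‖ * 1 := by
        gcongr
        exact Finset.prod_le_one (fun i _ => norm_nonneg x) (fun i _ => hx)
    _ = ‖A‖ := mul_one _

lemma norm_tvec_le (A : Tensor m n) (hm : 2 ≤ m) {x : Euc n} (hx : ‖x‖ ≤ 1) :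
    ‖tvec A hm x‖ ≤ ‖A‖ := by
  refine norm_le_of_inner_unit_le _ (norm_nonneg A) (fun w hw => ?_)
  rw [inner_tvec]
  refine le_trans (le_abs_self _) (le_trans (A.le_opNorm _) ?_)
  calc ‖A‖ * ∏ i, ‖Function.update (fun _ => x) (lastIdx hm) w i‖ ≤ ‖A‖ * 1 := by
        gcongr
        refine Finset.prod_le_one (fun i _ => norm_nonneg _) (fun i _ => ?_)
        rcases eq_or_ne i (lastIdx hm) with h | h <;> simp [Function.update_apply, h, hx, hw.le]
    _ = ‖A‖ := mul_one _

lemma norm_wvec_le (A : Tensor m n) (hm : 2 ≤ m) {x d : Euc n} (hx : ‖x‖ ≤ 1) (hd : ‖d‖ ≤ 1) :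
    ‖wvec A hm x d‖ ≤ ‖A‖ := by
  refine norm_le_of_inner_unit_le _ (norm_nonneg A) (fun w hw => ?_)
  rw [inner_wvec]
  refine le_trans (le_abs_self _) (le_trans (A.le_opNorm _) ?_)
  calc ‖A‖ * ∏ i, ‖Function.update (Function.update (fun _ => x) (sndIdx hm) d)
        (lastIdx hm) w i‖ ≤ ‖A‖ * 1 := by
        gcongr
        refine Finset.prod_le_one (fun i _ => norm_nonneg _) (fun i _ => ?_)
        rcases eq_or_ne i (lastIdx hm) with h | h <;>
          rcases eq_or_ne i (sndIdx hm) with h2 | h2 <;>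
          simp [Function.update_apply, h, h2, hx, hd, hw.le, sndIdx_ne_lastIdx hm]
    _ = ‖A‖ := mul_one _

end AuxProof2

noncomputable section AuxProof3

variable {m n : ℕ}

/-- Generic bound via `norm_image_sub_le` when all entries are ≤ 1. -/
lemma A_diff_le (A : Tensor m n) (hm : 2 ≤ m) (t₁ t₂ : Fin m → Euc n)
    (h₁ : ∀ i, ‖t₁ i‖ ≤ 1) (h₂ : ∀ i, ‖t₂ i‖ ≤ 1) {e : ℝ}
    (hd : ∀ i, ‖t₁ i - t₂ i‖ ≤ e) : |A t₁ - A t₂| ≤ ‖A‖ * m * e := by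
  have he : 0 ≤ e := le_trans (norm_nonneg _) (hd ⟨0, by omega⟩)
  have h := A.norm_image_sub_le t₁ t₂
  simp only [Real.norm_eq_abs, Fintype.card_fin] at h
  refine le_trans h ?_
  have hmax : max ‖t₁‖ ‖t₂‖ ^ (m - 1) ≤ 1 := by
    apply pow_le_one₀ (le_max_iff.2 (Or.inl (norm_nonneg _)))
    exact max_le (tuple_norm_le zero_le_one t₁ h₁) (tuple_norm_le zero_le_one t₂ h₂)
  have hsub : ‖t₁ - t₂‖ ≤ e := by
    refine tuple_norm_le he _ (fun i => ?_)
    simpa using hd i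
  calc ‖A‖ * m * max ‖t₁‖ ‖t₂‖ ^ (m - 1) * ‖t₁ - t₂‖
      ≤ ‖A‖ * m * 1 * e := by
        refine mul_le_mul ?_ hsub (norm_nonneg _) (by positivity)
        exact mul_le_mul_of_nonneg_left hmax (by positivity)
    _ = ‖A‖ * m * e := by ring

lemma entry_le_one {x w : Euc n} (hx : ‖x‖ ≤ 1) (hw : ‖w‖ ≤ 1) (l : Fin m) (i : Fin m) :
    ‖Function.update (fun _ => x) l w i‖ ≤ 1 := by
  rcases eq_or_ne i l with h | h <;> simp [Function.update_apply, h, hx, hw]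

lemma entry2_le_one {x u w : Euc n} (hx : ‖x‖ ≤ 1) (hu : ‖u‖ ≤ 1) (hw : ‖w‖ ≤ 1)
    (hm : 2 ≤ m) (i : Fin m) :
    ‖Function.update (Function.update (fun _ => x) (sndIdx hm) u) (lastIdx hm) w i‖ ≤ 1 := by
  rcases eq_or_ne i (lastIdx hm) with h | h <;> rcases eq_or_ne i (sndIdx hm) with h2 | h2 <;>
    simp [Function.update_apply, h, h2, hx, hu, hw, sndIdx_ne_lastIdx hm]

lemma tpow_sub_le (A : Tensor m n) (hm : 2 ≤ m) {x y : Euc n} (hx : ‖x‖ ≤ 1) (hy : ‖y‖ ≤ 1) :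
    |tpow A y - tpow A x| ≤ ‖A‖ * m * ‖y - x‖ := by
  refine A_diff_le A hm _ _ (fun i => hy) (fun i => hx) (fun i => le_refl _)

lemma norm_tvec_sub_le (A : Tensor m n) (hm : 2 ≤ m) {x y : Euc n}
    (hx : ‖x‖ ≤ 1) (hy : ‖y‖ ≤ 1) :
    ‖tvec A hm y - tvec A hm x‖ ≤ ‖A‖ * m * ‖y - x‖ := by
  refine norm_le_of_inner_unit_le _ (by positivity) (fun w hw => ?_)
  rw [inner_sub_left, inner_tvec, inner_tvec]
  refine le_trans (le_abs_self _) (A_diff_le A hm _ _ (entry_le_one hy hw.le _)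
    (entry_le_one hx hw.le _) (fun i => ?_))
  rcases eq_or_ne i (lastIdx hm) with h | h <;> simp [Function.update_apply, h]

lemma norm_wvec_sub_le (A : Tensor m n) (hm : 2 ≤ m) {x y u : Euc n}
    (hx : ‖x‖ ≤ 1) (hy : ‖y‖ ≤ 1) (hu : ‖u‖ ≤ 1) :
    ‖wvec A hm y u - wvec A hm x u‖ ≤ ‖A‖ * m * ‖y - x‖ := by
  refine norm_le_of_inner_unit_le _ (by positivity) (fun w hw => ?_)
  rw [inner_sub_left, inner_wvec, inner_wvec]
  refine le_trans (le_abs_self _) (A_diff_le A hm _ _ (entry2_le_one hy hu hw.le hm)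
    (entry2_le_one hx hu hw.le hm) (fun i => ?_))
  rcases eq_or_ne i (lastIdx hm) with h | h <;> rcases eq_or_ne i (sndIdx hm) with h2 | h2 <;>
    simp [Function.update_apply, h, h2]

lemma A2_sub_le (A : Tensor m n) (hm : 2 ≤ m) {x y u : Euc n}
    (hx : ‖x‖ ≤ 1) (hy : ‖y‖ ≤ 1) (hu : ‖u‖ ≤ 1) :
    |A2 A hm y u - A2 A hm x u| ≤ ‖A‖ * m * ‖y - x‖ := by
  refine A_diff_le A hm _ _ (entry2_le_one hy hu hu hm) (entry2_le_one hx hu hu hm) (fun i => ?_)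
  rcases eq_or_ne i (lastIdx hm) with h | h <;> rcases eq_or_ne i (sndIdx hm) with h2 | h2 <;>
    simp [Function.update_apply, h, h2]

lemma A2_sub_le' (A : Tensor m n) (hm : 2 ≤ m) {x u v : Euc n}
    (hx : ‖x‖ ≤ 1) (hu : ‖u‖ ≤ 1) (hv : ‖v‖ ≤ 1) :
    |A2 A hm x u - A2 A hm x v| ≤ ‖A‖ * m * ‖u - v‖ := by
  refine A_diff_le A hm _ _ (entry2_le_one hx hu hu hm) (entry2_le_one hx hv hv hm) (fun i => ?_)
  rcases eq_or_ne i (lastIdx hm) with h | h <;> rcases eq_or_ne i (sndIdx hm) with h2 | h2 <;>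
    simp [Function.update_apply, h, h2, sndIdx_ne_lastIdx hm]

end AuxProof3

noncomputable section AuxProof4

variable {m n : ℕ}

lemma FderivL_apply (A : Tensor m n) (hm : 2 ≤ m) (x d : Euc n) :
    FderivL A hm x d = ((m : ℝ) - 1) • wvec A hm x d - tpow A x • d
      - ((m : ℝ) * ⟪tvec A hm x, d⟫) • x := rfl

lemma inner_FderivL_self (A : Tensor m n) (hm : 2 ≤ m) {x u : Euc n} (hxu : ⟪x, u⟫ = 0) :
    ⟪u, FderivL A hm x u⟫ = ((m : ℝ) - 1) * A2 A hm x u - tpow A x * ‖u‖ ^ 2 := by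
  have h2 : ⟪u, x⟫ = 0 := by rw [real_inner_comm]; exact hxu
  have h3 : ⟪u, wvec A hm x u⟫ = A2 A hm x u := by
    rw [real_inner_comm]; exact inner_wvec_self A hm x u
  rw [FderivL_apply, inner_sub_right, inner_sub_right, real_inner_smul_right,
    real_inner_smul_right, real_inner_smul_right, h2, h3, real_inner_self_eq_norm_sq]
  ring

lemma wvec_zero (A : Tensor m n) (hm : 2 ≤ m) (x : Euc n) : wvec A hm x 0 = 0 := by
  have := wvec_smul A hm x 0 0
  simpa using this

lemma norm_wvec_sub_le' (A : Tensor m n) (hm : 2 ≤ m) {x y : Euc n} (d : Euc n)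
    (hx : ‖x‖ ≤ 1) (hy : ‖y‖ ≤ 1) :
    ‖wvec A hm y d - wvec A hm x d‖ ≤ ‖A‖ * m * ‖y - x‖ * ‖d‖ := by
  by_cases hd : d = 0
  · simp [hd, wvec_zero]
  · have hnd : (0:ℝ) < ‖d‖ := norm_pos_iff.2 hd
    have hu1 : ‖(‖d‖⁻¹ • d : Euc n)‖ ≤ 1 := by
      rw [norm_smul, Real.norm_eq_abs, abs_of_nonneg (inv_nonneg.2 hnd.le),
        inv_mul_cancel₀ (ne_of_gt hnd)]
    have h1 : wvec A hm y d = ‖d‖ • wvec A hm y (‖d‖⁻¹ • d) := by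
      rw [wvec_smul, smul_smul, mul_inv_cancel₀ (ne_of_gt hnd), one_smul]
    have h2 : wvec A hm x d = ‖d‖ • wvec A hm x (‖d‖⁻¹ • d) := by
      rw [wvec_smul, smul_smul, mul_inv_cancel₀ (ne_of_gt hnd), one_smul]
    rw [h1, h2, ← smul_sub, norm_smul, Real.norm_eq_abs, abs_of_nonneg hnd.le]
    calc ‖d‖ * ‖wvec A hm y (‖d‖⁻¹ • d) - wvec A hm x (‖d‖⁻¹ • d)‖
        ≤ ‖d‖ * (‖A‖ * m * ‖y - x‖) :=
          mul_le_mul_of_nonneg_left (norm_wvec_sub_le A hm hx hy hu1) hnd.le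
      _ = ‖A‖ * m * ‖y - x‖ * ‖d‖ := by ring

lemma FderivL_lip (A : Tensor m n) (hm : 2 ≤ m) {x y : Euc n} (d : Euc n)
    (hx : ‖x‖ ≤ 1) (hy : ‖y‖ ≤ 1) :
    ‖FderivL A hm y d - FderivL A hm x d‖
      ≤ ‖A‖ * (2 * m ^ 2 + 2 * m) * ‖y - x‖ * ‖d‖ := by
  have hm1 : (1:ℝ) ≤ (m:ℝ) := by exact_mod_cast le_trans one_le_two hm
  have e1 : ‖((m:ℝ) - 1) • wvec A hm y d - ((m:ℝ) - 1) • wvec A hm x d‖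
      ≤ ((m:ℝ) - 1) * (‖A‖ * m * ‖y - x‖ * ‖d‖) := by
    rw [← smul_sub, norm_smul, Real.norm_eq_abs, abs_of_nonneg (by linarith)]
    exact mul_le_mul_of_nonneg_left (norm_wvec_sub_le' A hm d hx hy) (by linarith)
  have e2 : ‖tpow A y • d - tpow A x • d‖ ≤ ‖A‖ * m * ‖y - x‖ * ‖d‖ := by
    rw [← sub_smul, norm_smul, Real.norm_eq_abs]
    gcongr
    exact tpow_sub_le A hm hx hy
  have e3 : ‖((m:ℝ) * ⟪tvec A hm y, d⟫) • y - ((m:ℝ) * ⟪tvec A hm x, d⟫) • x‖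
      ≤ (m:ℝ) * ((‖A‖ * m * ‖y - x‖) * ‖d‖ + ‖A‖ * ‖d‖ * ‖y - x‖) := by
    have hsplit : ((m:ℝ) * ⟪tvec A hm y, d⟫) • y - ((m:ℝ) * ⟪tvec A hm x, d⟫) • x
        = (m:ℝ) • ((⟪tvec A hm y - tvec A hm x, d⟫) • y + ⟪tvec A hm x, d⟫ • (y - x)) := by
      rw [inner_sub_left]
      module
    rw [hsplit, norm_smul, Real.norm_eq_abs, abs_of_nonneg (by linarith)]
    gcongr
    refine le_trans (norm_add_le _ _) ?_
    gcongr
    · rw [norm_smul, Real.norm_eq_abs]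
      calc |⟪tvec A hm y - tvec A hm x, d⟫| * ‖y‖ ≤ (‖tvec A hm y - tvec A hm x‖ * ‖d‖) * 1 := by
            gcongr
            exact abs_real_inner_le_norm _ _
        _ ≤ ‖A‖ * m * ‖y - x‖ * ‖d‖ := by
            rw [mul_one]
            gcongr
            exact norm_tvec_sub_le A hm hx hy
    · rw [norm_smul, Real.norm_eq_abs]
      calc |⟪tvec A hm x, d⟫| * ‖y - x‖ ≤ (‖tvec A hm x‖ * ‖d‖) * ‖y - x‖ := by
            gcongr
            exact abs_real_inner_le_norm _ _
        _ ≤ ‖A‖ * ‖d‖ * ‖y - x‖ := by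
            gcongr
            exact norm_tvec_le A hm hx
  have hexp : FderivL A hm y d - FderivL A hm x d
      = (((m:ℝ) - 1) • wvec A hm y d - ((m:ℝ) - 1) • wvec A hm x d)
        - (tpow A y • d - tpow A x • d)
        - (((m:ℝ) * ⟪tvec A hm y, d⟫) • y - ((m:ℝ) * ⟪tvec A hm x, d⟫) • x) := by
    rw [FderivL_apply, FderivL_apply]
    module
  rw [hexp]
  refine le_trans (norm_sub_le _ _) (le_trans (add_le_add (norm_sub_le _ _) e3) ?_)
  have hA0 : (0:ℝ) ≤ ‖A‖ := norm_nonneg A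
  have h0 : (0:ℝ) ≤ ‖y - x‖ := norm_nonneg _
  have h1 : (0:ℝ) ≤ ‖d‖ := norm_nonneg _
  nlinarith [e1, e2, mul_nonneg (mul_nonneg hA0 h0) h1, sq_nonneg ((m:ℝ) - 1),
    mul_nonneg h0 h1]

lemma norm_FderivL_self_le (A : Tensor m n) (hm : 2 ≤ m) {x : Euc n} (hx : ‖x‖ ≤ 1) :
    ‖FderivL A hm x x‖ ≤ 2 * m * ‖A‖ := by
  have hm1 : (1:ℝ) ≤ (m:ℝ) := by exact_mod_cast le_trans one_le_two hm
  rw [FderivL_apply]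
  refine le_trans (norm_sub_le _ _) (le_trans (add_le_add (norm_sub_le _ _) (le_refl _)) ?_)
  have b1 : ‖((m:ℝ) - 1) • wvec A hm x x‖ ≤ ((m:ℝ) - 1) * ‖A‖ := by
    rw [norm_smul, Real.norm_eq_abs, abs_of_nonneg (by linarith)]
    exact mul_le_mul_of_nonneg_left (norm_wvec_le A hm hx hx) (by linarith)
  have b2 : ‖tpow A x • x‖ ≤ ‖A‖ := by
    rw [norm_smul, Real.norm_eq_abs]
    calc |tpow A x| * ‖x‖ ≤ ‖A‖ * 1 := by
          gcongr
          exact abs_tpow_le A hx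
      _ = ‖A‖ := mul_one _
  have b3 : ‖((m:ℝ) * ⟪tvec A hm x, x⟫) • x‖ ≤ (m:ℝ) * ‖A‖ := by
    rw [norm_smul, Real.norm_eq_abs, abs_mul, abs_of_nonneg (by linarith : (0:ℝ) ≤ (m:ℝ))]
    calc (m:ℝ) * |⟪tvec A hm x, x⟫| * ‖x‖ ≤ (m:ℝ) * (‖tvec A hm x‖ * ‖x‖) * 1 := by
          gcongr
          exact abs_real_inner_le_norm _ _
      _ ≤ (m:ℝ) * (‖A‖ * 1) * 1 := by
          gcongr
          exact norm_tvec_le A hm hx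
      _ = (m:ℝ) * ‖A‖ := by ring
  have hA0 : (0:ℝ) ≤ ‖A‖ := norm_nonneg A
  linarith

end AuxProof4

noncomputable section AuxProof5

variable {m n : ℕ}

lemma sum_ite_fin {m : ℕ} (hm : 2 ≤ m) (a : Fin m) (c : ℝ) :
    (∑ i : Fin m, if i = a then (0:ℝ) else c) = ((m:ℝ) - 1) * c := by
  rw [Finset.sum_ite, Finset.sum_const, Finset.sum_const]
  have h1 : (Finset.filter (fun i => i = a) Finset.univ).card = 1 := by
    rw [Finset.filter_eq']
    simp
  have h2 : (Finset.filter (fun i => ¬i = a) Finset.univ).card = m - 1 := by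
    rw [Finset.filter_not, Finset.filter_eq']
    simp [Finset.card_sdiff]
  rw [h1, h2]
  have : ((m - 1 : ℕ) : ℝ) = (m : ℝ) - 1 := by
    have : 1 ≤ m := by omega
    push_cast [this]
    ring
  simp [this]

lemma hasFDerivAt_innerF (A : Tensor m n) (hm : 2 ≤ m) (hA : IsSymmTensor A) (v y : Euc n) :
    HasFDerivAt (fun z : Euc n => (⟪v, Fvec A hm z⟫ : ℝ))
      ((innerSL ℝ (E := Euc n) v).comp (FderivL A hm y)) y := by
  classical
  have hfun : (fun z : Euc n => (⟪v, Fvec A hm z⟫ : ℝ))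
      = fun z => A (fun i => if i = lastIdx hm then v else z) - A (fun _ => z) * ⟪v, z⟫ := by
    funext z
    rw [Fvec, inner_sub_right, real_inner_smul_right,
      show (⟪v, tvec A hm z⟫:ℝ) = ⟪tvec A hm z, v⟫ from real_inner_comm _ _, inner_tvec, tpow]
    congr 2
    funext i
    simp [Function.update_apply]
  rw [hfun]
  -- derivative of the first piece
  set g' : Fin m → Euc n →L[ℝ] Euc n :=
    fun i => if i = lastIdx hm then (0 : Euc n →L[ℝ] Euc n) else ContinuousLinearMap.id ℝ (Euc n)
    with hg'
  have hg : ∀ i : Fin m, HasFDerivAt (fun z : Euc n => if i = lastIdx hm then v else z)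
      (g' i) y := by
    intro i
    by_cases h : i = lastIdx hm
    · simpa [hg', h] using hasFDerivAt_const v y
    · simp only [hg', h, if_false]
      exact hasFDerivAt_id y
  have h1 : HasFDerivAt (fun z : Euc n => A (fun i => if i = lastIdx hm then v else z))
      (∑ i : Fin m, (A.toContinuousLinearMap
          (fun j => if j = lastIdx hm then v else y) i) ∘L (g' i)) y :=
    HasFDerivAt.multilinear_comp (f := A) hg
  have hg2 : ∀ i : Fin m, HasFDerivAt (fun z : Euc n => z)
      (ContinuousLinearMap.id ℝ (Euc n)) y := fun _ => hasFDerivAt_id y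
  have h2 : HasFDerivAt (fun z : Euc n => A (fun _ => z))
      (∑ i : Fin m, (A.toContinuousLinearMap (fun _ => y) i) ∘L
        (ContinuousLinearMap.id ℝ (Euc n))) y :=
    HasFDerivAt.multilinear_comp (f := A) hg2
  have h3 : HasFDerivAt (fun z : Euc n => (⟪v, z⟫ : ℝ)) (innerSL ℝ (E := Euc n) v) y := by
    exact (innerSL ℝ (E := Euc n) v).hasFDerivAt
  have h4 := h1.sub (h2.mul h3)
  refine h4.congr_fderiv ?_
  ext h
  -- evaluate both sides
  have hp : (fun j => if j = lastIdx hm then v else y)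
      = Function.update (fun _ : Fin m => y) (lastIdx hm) v := by
    funext j; simp [Function.update_apply]
  have e1 : (∑ i : Fin m, (A.toContinuousLinearMap
      (fun j => if j = lastIdx hm then v else y) i) ∘L (g' i)) h
      = ((m:ℝ) - 1) * ⟪wvec A hm y h, v⟫ := by
    rw [ContinuousLinearMap.sum_apply]
    rw [Finset.sum_congr rfl (g := fun i => if i = lastIdx hm then (0:ℝ)
        else ⟪wvec A hm y h, v⟫) (fun i _ => ?_), sum_ite_fin hm]
    by_cases hi : i = lastIdx hm
    · simp [hg', hi]
    · simp only [hg', hi, if_false, ContinuousLinearMap.comp_apply,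
        ContinuousLinearMap.id_apply, ContinuousMultilinearMap.toContinuousLinearMap_apply]
      rw [hp, Function.update_comm (Ne.symm hi), A_update2_eq hA hm _ _ _ hi]
  have e2 : (∑ i : Fin m, (A.toContinuousLinearMap (fun _ => y) i) ∘L
      (ContinuousLinearMap.id ℝ (Euc n))) h = (m:ℝ) * ⟪tvec A hm y, h⟫ := by
    rw [ContinuousLinearMap.sum_apply]
    rw [Finset.sum_congr rfl (g := fun _ => (⟪tvec A hm y, h⟫:ℝ)) (fun i _ => ?_)]
    · rw [Finset.sum_const, Finset.card_univ, Fintype.card_fin, nsmul_eq_mul]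
    · simp only [ContinuousLinearMap.comp_apply, ContinuousLinearMap.id_apply,
        ContinuousMultilinearMap.toContinuousLinearMap_apply]
      exact A_update_eq hA hm y h i
  simp only [ContinuousLinearMap.sub_apply, ContinuousLinearMap.add_apply,
    ContinuousLinearMap.smul_apply, ContinuousLinearMap.coe_comp', Function.comp_apply,
    innerSL_apply_apply, smul_eq_mul]
  rw [e1, e2, FderivL_apply, inner_sub_right, inner_sub_right, real_inner_smul_right,
    real_inner_smul_right, real_inner_smul_right, tpow,
    real_inner_comm v (wvec A hm y h)]
  ring

end AuxProof5

noncomputable section AuxProof6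

variable {m n : ℕ}

lemma taylor_bound (A : Tensor m n) (hm : 2 ≤ m) (hA : IsSymmTensor A) {x y : Euc n}
    (hx : ‖x‖ ≤ 1) (hy : ‖y‖ ≤ 1) :
    ‖Fvec A hm y - Fvec A hm x - FderivL A hm x (y - x)‖
      ≤ ‖A‖ * (2 * m ^ 2 + 2 * m) * ‖y - x‖ ^ 2 := by
  set L : ℝ := ‖A‖ * (2 * m ^ 2 + 2 * m) with hL
  have hL0 : 0 ≤ L := by positivity
  set δ : ℝ := ‖y - x‖ with hδ
  have hδ0 : 0 ≤ δ := norm_nonneg _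
  set R : Euc n := Fvec A hm y - Fvec A hm x - FderivL A hm x (y - x) with hR
  have key : ∀ v : Euc n, (⟪v, R⟫ : ℝ) ≤ ‖v‖ * (L * δ) * δ := by
    intro v
    set s : Set (Euc n) := Metric.closedBall x δ ∩ Metric.closedBall 0 1 with hs
    have hconv : Convex ℝ s := (convex_closedBall _ _).inter (convex_closedBall _ _)
    have hxs : x ∈ s := ⟨Metric.mem_closedBall_self hδ0, by
      simpa [Metric.mem_closedBall, dist_eq_norm] using hx⟩
    have hys : y ∈ s := ⟨Metric.mem_closedBall.2 (le_of_eq (dist_eq_norm y x)), by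
      simpa [Metric.mem_closedBall, dist_eq_norm] using hy⟩
    set f : Euc n → ℝ := fun z => ⟪v, Fvec A hm z⟫ - ((innerSL ℝ (E := Euc n) v).comp
      (FderivL A hm x)) z with hf
    set f' : Euc n → (Euc n →L[ℝ] ℝ) := fun z => (innerSL ℝ (E := Euc n) v).comp
      (FderivL A hm z) - (innerSL ℝ (E := Euc n) v).comp (FderivL A hm x) with hf'
    have hder : ∀ z ∈ s, HasFDerivWithinAt f (f' z) s z := by
      intro z _
      exact ((hasFDerivAt_innerF A hm hA v z).sub
        (((innerSL ℝ (E := Euc n) v).comp (FderivL A hm x)).hasFDerivAt)).hasFDerivWithinAt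
    have hbound : ∀ z ∈ s, ‖f' z‖ ≤ ‖v‖ * (L * δ) := by
      intro z hz
      have hz1 : ‖z‖ ≤ 1 := by simpa [Metric.mem_closedBall, dist_eq_norm] using hz.2
      have hzx : ‖z - x‖ ≤ δ := by simpa [Metric.mem_closedBall, dist_eq_norm] using hz.1
      refine ContinuousLinearMap.opNorm_le_bound _ (by positivity) (fun q => ?_)
      have : f' z q = ⟪v, FderivL A hm z q - FderivL A hm x q⟫ := by
        simp [hf', inner_sub_right]
      rw [this]
      calc ‖(⟪v, FderivL A hm z q - FderivL A hm x q⟫:ℝ)‖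
          ≤ ‖v‖ * ‖FderivL A hm z q - FderivL A hm x q‖ := by
            rw [Real.norm_eq_abs]; exact abs_real_inner_le_norm _ _
        _ ≤ ‖v‖ * (L * ‖z - x‖ * ‖q‖) := by
            gcongr
            exact FderivL_lip A hm q hx hz1
        _ ≤ ‖v‖ * (L * δ) * ‖q‖ := by
            nlinarith [mul_nonneg (norm_nonneg v) (norm_nonneg q),
              mul_le_mul_of_nonneg_left hzx hL0]
    have mvt := hconv.norm_image_sub_le_of_norm_hasFDerivWithin_le hder hbound hxs hys
    have hfy : f y - f x = ⟪v, R⟫ := by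
      simp only [hf, hR]
      simp only [map_sub, inner_sub_right, ContinuousLinearMap.comp_apply, innerSL_apply_apply]
      ring
    rw [hfy] at mvt
    calc (⟪v, R⟫:ℝ) ≤ ‖(⟪v, R⟫:ℝ)‖ := le_abs_self _
      _ ≤ ‖v‖ * (L * δ) * ‖y - x‖ := mvt
      _ = ‖v‖ * (L * δ) * δ := by rw [← hδ]
  have := key R
  rw [real_inner_self_eq_norm_sq] at this
  have hRn : ‖R‖ ≤ L * δ * δ := by nlinarith [norm_nonneg R, mul_nonneg (mul_nonneg hL0 hδ0) hδ0]
  calc ‖R‖ ≤ L * δ * δ := hRn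
    _ = L * δ ^ 2 := by ring

end AuxProof6

noncomputable section AuxProof7

variable {m n : ℕ}

set_option maxHeartbeats 2000000 in
lemma coerc0 (A : Tensor m n) (hm : 2 ≤ m) (xb : Euc n) (lam : ℝ)
    (hAss : AssumpA A hm xb lam) :
    ∃ c > 0, ∀ u : Euc n, ⟪xb, u⟫ = 0 →
      c * ‖u‖ ^ 2 ≤ ((m:ℝ) - 1) * A2 A hm xb u - lam * ‖u‖ ^ 2 := by
  classical
  set q : Euc n → ℝ := fun u => ((m:ℝ) - 1) * A2 A hm xb u - lam * ‖u‖ ^ 2 with hq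
  have hqcont : Continuous q := by
    have hψ : Continuous fun u : Euc n =>
        Function.update (Function.update (fun _ : Fin m => xb) (sndIdx hm) u) (lastIdx hm) u := by
      apply continuous_pi
      intro i
      simp only [Function.update_apply]
      split_ifs <;> first | exact continuous_id | exact continuous_const
    have hA2 : Continuous fun u : Euc n => A2 A hm xb u := A.cont.comp hψ
    exact (continuous_const.mul hA2).sub (continuous_const.mul (continuous_norm.pow 2))
  set S : Set (Euc n) := {u | ⟪xb, u⟫ = 0} ∩ Metric.sphere 0 1 with hS
  have hScomp : IsCompact S := by
    refine (isCompact_sphere (0 : Euc n) 1).inter_left ?_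
    exact isClosed_eq (continuous_const.inner continuous_id) continuous_const
  have hscale : ∀ u : Euc n, u ≠ 0 → ⟪xb, u⟫ = 0 → (‖u‖⁻¹ • u) ∈ S := by
    intro u hu htan
    have hnu : (0:ℝ) < ‖u‖ := norm_pos_iff.2 hu
    constructor
    · simp only [Set.mem_setOf_eq, real_inner_smul_right, htan, mul_zero]
    · simp [norm_smul, abs_of_nonneg (inv_nonneg.2 hnu.le), inv_mul_cancel₀ (ne_of_gt hnu)]
  by_cases hSne : S.Nonempty
  · obtain ⟨u₀, hu₀S, hmin⟩ := hScomp.exists_isMinOn hSne hqcont.continuousOn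
    have hu₀norm : ‖u₀‖ = 1 := by simpa using hu₀S.2
    have hu₀ne : u₀ ≠ 0 := by
      intro h; rw [h] at hu₀norm; simp at hu₀norm
    have hc0 : 0 < q u₀ := by
      have := hAss.2.2.2 u₀ hu₀ne hu₀S.1
      simpa [hq, hu₀norm] using this
    refine ⟨q u₀, hc0, fun u htan => ?_⟩
    by_cases hu : u = 0
    · simp [hu, hq, A2_zero]
    · have hnu : (0:ℝ) < ‖u‖ := norm_pos_iff.2 hu
      have hmem := hscale u hu htan
      have hmin' : q u₀ ≤ q (‖u‖⁻¹ • u) := hmin hmem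
      have hexpand : q (‖u‖⁻¹ • u) = (‖u‖⁻¹) ^ 2 * (((m:ℝ) - 1) * A2 A hm xb u) -
          lam * ((‖u‖⁻¹) ^ 2 * ‖u‖ ^ 2) := by
        simp only [hq, A2_smul, norm_smul, Real.norm_eq_abs,
          abs_of_nonneg (inv_nonneg.2 hnu.le), mul_pow]
        ring
      have h2 : (‖u‖⁻¹) ^ 2 * ‖u‖ ^ 2 = 1 := by
        rw [← mul_pow, inv_mul_cancel₀ (ne_of_gt hnu), one_pow]
      rw [hexpand, h2] at hmin'
      have hmul := mul_le_mul_of_nonneg_right hmin' (sq_nonneg ‖u‖)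
      have h3 : (‖u‖⁻¹ ^ 2 * (((m:ℝ) - 1) * A2 A hm xb u) - lam * 1) * ‖u‖ ^ 2
          = ((m:ℝ) - 1) * A2 A hm xb u - lam * ‖u‖ ^ 2 := by
        calc (‖u‖⁻¹ ^ 2 * (((m:ℝ) - 1) * A2 A hm xb u) - lam * 1) * ‖u‖ ^ 2
            = (((m:ℝ) - 1) * A2 A hm xb u) * (‖u‖⁻¹ ^ 2 * ‖u‖ ^ 2)
              - lam * ‖u‖ ^ 2 := by ring
          _ = ((m:ℝ) - 1) * A2 A hm xb u - lam * ‖u‖ ^ 2 := by rw [h2, mul_one]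
      rw [h3] at hmul
      exact hmul
  · refine ⟨1, one_pos, fun u htan => ?_⟩
    by_cases hu : u = 0
    · simp [hu, hq, A2_zero]
    · exact absurd ⟨_, hscale u hu htan⟩ hSne

set_option maxHeartbeats 2000000 in
lemma coerc (A : Tensor m n) (hm : 2 ≤ m) (xb : Euc n) (lam : ℝ)
    (hAss : AssumpA A hm xb lam) :
    ∃ c > 0, ∃ ε₁ > 0, ε₁ ≤ 1 ∧ ∀ x u : Euc n, ‖x‖ = 1 → ‖x - xb‖ ≤ ε₁ → ⟪x, u⟫ = 0 →
      c * ‖u‖ ^ 2 ≤ ((m:ℝ) - 1) * A2 A hm x u - tpow A x * ‖u‖ ^ 2 := by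
  obtain ⟨c₀, hc₀, h₀⟩ := coerc0 A hm xb lam hAss
  have hxb : ‖xb‖ = 1 := hAss.1
  have hm1 : (1:ℝ) ≤ (m:ℝ) := by exact_mod_cast le_trans one_le_two hm
  have hm0 : (0:ℝ) ≤ (m:ℝ) - 1 := by linarith
  set B : ℝ := (2 * (m:ℝ) + 1) * m * (‖A‖ + 1) with hB
  have hB0 : 0 < B := by positivity
  set D : ℝ := c₀ + |lam| + B + 1 with hD
  have hD0 : 0 < D := by positivity
  refine ⟨c₀ / 2, by positivity, min 1 (c₀ / (2 * D)), by positivity,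
    min_le_left _ _, fun x u hx hδe hxu => ?_⟩
  have hδ0 : (0:ℝ) ≤ ‖x - xb‖ := norm_nonneg _
  have hδ1 : ‖x - xb‖ ≤ 1 := le_trans hδe (min_le_left _ _)
  have hδD : (c₀ + |lam| + B + 1) * ‖x - xb‖ ≤ c₀ / 2 := by
    have h1 : ‖x - xb‖ ≤ c₀ / (2 * D) := le_trans hδe (min_le_right _ _)
    calc (c₀ + |lam| + B + 1) * ‖x - xb‖ = D * ‖x - xb‖ := by rw [hD]
      _ ≤ D * (c₀ / (2 * D)) := mul_le_mul_of_nonneg_left h1 hD0.le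
      _ = c₀ / 2 := by field_simp
  have unit_case : ∀ w : Euc n, ‖w‖ = 1 → ⟪x, w⟫ = 0 →
      c₀ / 2 ≤ ((m:ℝ) - 1) * A2 A hm x w - tpow A x := by
    intro w hw hxw
    set t : ℝ := ⟪xb, w⟫ with ht
    set uh : Euc n := w - t • xb with huh
    have htb : |t| ≤ ‖x - xb‖ := by
      have h1 : t = ⟪xb - x, w⟫ := by rw [inner_sub_left, hxw, sub_zero, ht]
      rw [h1]
      calc |⟪xb - x, w⟫| ≤ ‖xb - x‖ * ‖w‖ := abs_real_inner_le_norm _ _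
        _ = ‖x - xb‖ := by rw [hw, mul_one, ← norm_neg]; congr 1; abel
    have huhtan : ⟪xb, uh⟫ = 0 := by
      rw [huh, inner_sub_right, real_inner_smul_right, real_inner_self_eq_norm_sq, hxb, ← ht]
      ring
    have huh2 : ‖uh‖ ^ 2 = 1 - t ^ 2 := by
      have hub : (⟪w, t • xb⟫:ℝ) = t ^ 2 := by
        rw [real_inner_smul_right, real_inner_comm, ← ht]; ring
      have hnb : ‖t • xb‖ ^ 2 = t ^ 2 := by
        rw [norm_smul, Real.norm_eq_abs, hxb, mul_one, sq_abs]
      rw [huh, norm_sub_sq_real, hub, hnb, hw]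
      ring
    have huhle : ‖uh‖ ≤ 1 := by nlinarith [norm_nonneg uh, sq_nonneg t]
    have h0 := h₀ uh huhtan
    have d1 : |A2 A hm x w - A2 A hm xb w| ≤ ‖A‖ * m * ‖x - xb‖ :=
      A2_sub_le A hm (x := xb) (y := x) (u := w) (by rw [hxb]) (by rw [hx]) hw.le
    have d2 : |A2 A hm xb w - A2 A hm xb uh| ≤ ‖A‖ * m * |t| := by
      have h3 := A2_sub_le' A hm (x := xb) (u := w) (v := uh) (by rw [hxb]) hw.le huhle
      have huuh : w - uh = t • xb := by rw [huh]; abel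
      rw [huuh, norm_smul, Real.norm_eq_abs, hxb, mul_one] at h3
      exact h3
    have d3 : |tpow A x - lam| ≤ ‖A‖ * m * ‖x - xb‖ := by
      have hlam : lam = tpow A xb := hAss.2.2.1
      rw [hlam]
      exact tpow_sub_le A hm (by rw [hxb]) (by rw [hx])
    have hA0 : (0:ℝ) ≤ ‖A‖ := norm_nonneg A
    have e1a := mul_le_mul_of_nonneg_left (abs_le.1 d1).1 hm0
    have e1b := mul_le_mul_of_nonneg_left (abs_le.1 d2).1 hm0
    have e3 : tpow A x ≤ lam + ‖A‖ * m * ‖x - xb‖ := by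
      have := (abs_le.1 d3).2; linarith
    have ht1 : |t| ≤ 1 := le_trans htb hδ1
    have ht2 : t ^ 2 ≤ ‖x - xb‖ := by
      nlinarith [sq_abs t, mul_le_mul htb ht1 (abs_nonneg t) hδ0]
    have e4 : lam * ‖uh‖ ^ 2 - lam ≥ -(|lam| * ‖x - xb‖) := by
      rw [huh2]
      have h5 : |lam * t ^ 2| ≤ |lam| * ‖x - xb‖ := by
        rw [abs_mul, abs_of_nonneg (sq_nonneg t)]
        exact mul_le_mul_of_nonneg_left ht2 (abs_nonneg lam)
      linarith [le_abs_self (lam * t ^ 2), h5]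
    have e5 : c₀ * ‖uh‖ ^ 2 ≥ c₀ - c₀ * ‖x - xb‖ := by
      rw [huh2]
      nlinarith
    have t1 : ((m:ℝ) - 1) * (‖A‖ * m * |t|) ≤ ((m:ℝ) - 1) * (‖A‖ * m * ‖x - xb‖) := by
      have := mul_le_mul_of_nonneg_left htb (mul_nonneg hA0 (by linarith : (0:ℝ) ≤ (m:ℝ)))
      exact mul_le_mul_of_nonneg_left this hm0
    have hAmB : ‖A‖ * m * (2 * (m:ℝ) - 1) ≤ B := by rw [hB]; nlinarith
    have hADδ := mul_le_mul_of_nonneg_right hAmB hδ0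
    linarith [e1a, e1b, h0, e3, e4, e5, t1, hADδ, hδD, hδ0]
  by_cases hu : u = 0
  · simp [hu, A2_zero]
  · have hnu : (0:ℝ) < ‖u‖ := norm_pos_iff.2 hu
    have huu : ‖(‖u‖⁻¹ • u : Euc n)‖ = 1 := by
      rw [norm_smul, Real.norm_eq_abs, abs_of_nonneg (inv_nonneg.2 hnu.le),
        inv_mul_cancel₀ (ne_of_gt hnu)]
    have htanu : (⟪x, ‖u‖⁻¹ • u⟫:ℝ) = 0 := by
      rw [real_inner_smul_right, hxu, mul_zero]
    have hkey := unit_case _ huu htanu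
    rw [A2_smul] at hkey
    have h2 : (‖u‖⁻¹) ^ 2 * ‖u‖ ^ 2 = 1 := by
      rw [← mul_pow, inv_mul_cancel₀ (ne_of_gt hnu), one_pow]
    have hmul := mul_le_mul_of_nonneg_right hkey (sq_nonneg ‖u‖)
    have h3 : (((m:ℝ) - 1) * (‖u‖⁻¹ ^ 2 * A2 A hm x u) - tpow A x) * ‖u‖ ^ 2
        = ((m:ℝ) - 1) * A2 A hm x u - tpow A x * ‖u‖ ^ 2 := by
      calc (((m:ℝ) - 1) * (‖u‖⁻¹ ^ 2 * A2 A hm x u) - tpow A x) * ‖u‖ ^ 2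
          = ((m:ℝ) - 1) * A2 A hm x u * (‖u‖⁻¹ ^ 2 * ‖u‖ ^ 2) - tpow A x * ‖u‖ ^ 2 := by ring
        _ = ((m:ℝ) - 1) * A2 A hm x u - tpow A x * ‖u‖ ^ 2 := by rw [h2]; ring
    rw [h3] at hmul
    have h4 : c₀ / 2 * ‖u‖ ^ 2 ≤ c₀ / 2 * ‖u‖ ^ 2 := le_refl _
    linarith [hmul]

end AuxProof7

noncomputable section AuxProof8

variable {m n : ℕ}

set_option maxHeartbeats 1000000 in
lemma mainstep (A : Tensor m n) (hm : 2 ≤ m) (hA : IsSymmTensor A) (xb : Euc n) (lam : ℝ)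
    (hAss : AssumpA A hm xb lam) (c ε₁ : ℝ) (hc : 0 < c) (hε11 : ε₁ ≤ 1)
    (hcoerc : ∀ x u : Euc n, ‖x‖ = 1 → ‖x - xb‖ ≤ ε₁ → ⟪x, u⟫ = 0 →
      c * ‖u‖ ^ 2 ≤ ((m:ℝ) - 1) * A2 A hm x u - tpow A x * ‖u‖ ^ 2)
    (x d : Euc n) (hx : ‖x‖ = 1) (hnd : NewtonDir A hm x d) (hδe : ‖x - xb‖ ≤ ε₁) :
    ‖x + d - xb‖ ≤ ((‖A‖ * (2 * m ^ 2 + 2 * m) + m * ‖A‖) / c + 1 / 2) * ‖x - xb‖ ^ 2 := by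
  have hxb : ‖xb‖ = 1 := hAss.1
  have hA0 : (0:ℝ) ≤ ‖A‖ := norm_nonneg A
  have hm1 : (1:ℝ) ≤ (m:ℝ) := by exact_mod_cast le_trans one_le_two hm
  set L : ℝ := ‖A‖ * (2 * m ^ 2 + 2 * m) with hLdef
  have hL0 : 0 ≤ L := by positivity
  have hFxb : Fvec A hm xb = 0 := by
    rw [Fvec, hAss.2.1, ← hAss.2.2.1, sub_self]
  have hxe : (⟪x, xb - x⟫:ℝ) = -(‖x - xb‖ ^ 2) / 2 := by
    have h1 : ‖x - xb‖ ^ 2 = 2 - 2 * ⟪x, xb⟫ := by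
      rw [norm_sub_sq_real, hx, hxb]; ring
    have h2 : (⟪x, xb - x⟫:ℝ) = ⟪x, xb⟫ - 1 := by
      rw [inner_sub_right, real_inner_self_eq_norm_sq, hx]; ring
    linarith
  have habs : |(⟪x, xb - x⟫:ℝ)| = ‖x - xb‖ ^ 2 / 2 := by
    rw [hxe, abs_div, abs_neg, abs_of_nonneg (sq_nonneg _)]
    norm_num
  set u : Euc n := d - Pproj x (xb - x) with hudef
  have hxu : (⟪x, u⟫:ℝ) = 0 := by
    rw [hudef, inner_sub_right, hnd.1, Pproj, inner_sub_right, real_inner_smul_right,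
      real_inner_self_eq_norm_sq, hx]
    ring
  have hux : (⟪u, x⟫:ℝ) = 0 := by rw [real_inner_comm]; exact hxu
  have hco : c * ‖u‖ ^ 2 ≤ ⟪u, FderivL A hm x u⟫ := by
    rw [inner_FderivL_self A hm hxu]
    exact hcoerc x u hx hδe hxu
  have hN : (⟪u, FderivL A hm x d + Fvec A hm x⟫:ℝ) = 0 := by
    have hz := hnd.2
    rw [Pproj, sub_eq_zero] at hz
    rw [hz, real_inner_smul_right, hux, mul_zero]
  set Rv : Euc n := -(Fvec A hm x + FderivL A hm x (xb - x)) with hRdef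
  have hR : ‖Rv‖ ≤ L * ‖x - xb‖ ^ 2 := by
    have := taylor_bound A hm hA (x := x) (y := xb) (by rw [hx]) (by rw [hxb])
    have heq : Fvec A hm xb - Fvec A hm x - FderivL A hm x (xb - x) = Rv := by
      rw [hFxb, hRdef]; abel
    rw [heq] at this
    rw [show ‖xb - x‖ = ‖x - xb‖ from norm_sub_rev _ _] at this
    exact this
  have hFx : ‖FderivL A hm x x‖ ≤ 2 * m * ‖A‖ := norm_FderivL_self_le A hm (by rw [hx])
  have hid : FderivL A hm x u = FderivL A hm x d - FderivL A hm x (xb - x)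
      + ⟪x, xb - x⟫ • FderivL A hm x x := by
    have h3 : u = d - (xb - x) + ⟪x, xb - x⟫ • x := by
      rw [hudef, Pproj]; abel
    rw [h3, map_add, map_sub, map_smul]
  have hsum : (⟪u, FderivL A hm x u⟫:ℝ) = ⟪u, Rv⟫ + ⟪x, xb - x⟫ * ⟪u, FderivL A hm x x⟫ := by
    rw [hid, inner_add_right, inner_sub_right, real_inner_smul_right]
    have h4 : (⟪u, FderivL A hm x d⟫:ℝ) = -⟪u, Fvec A hm x⟫ := by
      have := hN
      rw [inner_add_right] at this
      linarith
    rw [h4, hRdef]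
    rw [inner_neg_right, inner_add_right]
    ring
  have hubound : c * ‖u‖ ^ 2 ≤ ‖u‖ * ((L + m * ‖A‖) * ‖x - xb‖ ^ 2) := by
    have b1 : (⟪u, Rv⟫:ℝ) ≤ ‖u‖ * (L * ‖x - xb‖ ^ 2) := by
      calc (⟪u, Rv⟫:ℝ) ≤ |⟪u, Rv⟫| := le_abs_self _
        _ ≤ ‖u‖ * ‖Rv‖ := abs_real_inner_le_norm _ _
        _ ≤ ‖u‖ * (L * ‖x - xb‖ ^ 2) := mul_le_mul_of_nonneg_left hR (norm_nonneg u)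
    have b2 : (⟪x, xb - x⟫:ℝ) * ⟪u, FderivL A hm x x⟫
        ≤ (‖x - xb‖ ^ 2 / 2) * (‖u‖ * (2 * m * ‖A‖)) := by
      calc (⟪x, xb - x⟫:ℝ) * ⟪u, FderivL A hm x x⟫
          ≤ |(⟪x, xb - x⟫:ℝ) * ⟪u, FderivL A hm x x⟫| := le_abs_self _
        _ = |(⟪x, xb - x⟫:ℝ)| * |(⟪u, FderivL A hm x x⟫:ℝ)| := abs_mul _ _
        _ ≤ (‖x - xb‖ ^ 2 / 2) * (‖u‖ * (2 * m * ‖A‖)) := by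
            rw [habs]
            refine mul_le_mul_of_nonneg_left ?_ (by positivity)
            calc |(⟪u, FderivL A hm x x⟫:ℝ)| ≤ ‖u‖ * ‖FderivL A hm x x‖ :=
                  abs_real_inner_le_norm _ _
              _ ≤ ‖u‖ * (2 * m * ‖A‖) := mul_le_mul_of_nonneg_left hFx (norm_nonneg u)
    calc c * ‖u‖ ^ 2 ≤ ⟪u, FderivL A hm x u⟫ := hco
      _ = ⟪u, Rv⟫ + ⟪x, xb - x⟫ * ⟪u, FderivL A hm x x⟫ := hsum
      _ ≤ ‖u‖ * (L * ‖x - xb‖ ^ 2) + (‖x - xb‖ ^ 2 / 2) * (‖u‖ * (2 * m * ‖A‖)) := by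
          linarith [b1, b2]
      _ = ‖u‖ * ((L + m * ‖A‖) * ‖x - xb‖ ^ 2) := by ring
  have hu : ‖u‖ ≤ (L + m * ‖A‖) * ‖x - xb‖ ^ 2 / c := by
    rcases eq_or_lt_of_le (norm_nonneg u) with h0 | hpos
    · rw [← h0]
      positivity
    · rw [le_div_iff₀ hc]
      nlinarith [hubound, hpos]
  have hxd : x + d - xb = u - ⟪x, xb - x⟫ • x := by
    have h5 : d = u + Pproj x (xb - x) := by rw [hudef]; abel
    rw [h5, Pproj]
    abel
  calc ‖x + d - xb‖ = ‖u - ⟪x, xb - x⟫ • x‖ := by rw [hxd]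
    _ ≤ ‖u‖ + ‖(⟪x, xb - x⟫:ℝ) • x‖ := norm_sub_le _ _
    _ = ‖u‖ + ‖x - xb‖ ^ 2 / 2 := by
        rw [norm_smul, Real.norm_eq_abs, habs, hx, mul_one]
    _ ≤ (L + m * ‖A‖) * ‖x - xb‖ ^ 2 / c + ‖x - xb‖ ^ 2 / 2 := by linarith [hu]
    _ = ((L + m * ‖A‖) / c + 1 / 2) * ‖x - xb‖ ^ 2 := by ring

end AuxProof8

set_option maxHeartbeats 1000000

/-- local quadratic convergence of the feasible local Newton method. -/
theorem stmt9 {m n : ℕ} (hn : 1 ≤ n) (hm : 2 ≤ m) (A : Tensor m n) (hA : IsSymmTensor A)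
    (xb : Euc n) (lam : ℝ) (hAss : AssumpA A hm xb lam) :
    ∃ ε > 0, ∃ C > 0, ∀ x d : ℕ → Euc n,
      (∀ k, ‖x k‖ = 1) → (∀ k, NewtonDir A hm (x k) (d k)) →
      (∀ k, x (k + 1) = ‖x k + d k‖⁻¹ • (x k + d k)) → ‖x 0 - xb‖ ≤ ε →
      (∀ k, ‖x (k + 1) - xb‖ ≤ C * ‖x k - xb‖ ^ 2) ∧
      Filter.Tendsto x Filter.atTop (nhds xb) := by
  obtain ⟨c, hc, ε₁, hε₁, hε₁1, hcoerc⟩ := coerc A hm xb lam hAss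
  obtain ⟨K, hK0, hstep⟩ : ∃ K > 0, ∀ x d : Euc n, ‖x‖ = 1 → NewtonDir A hm x d →
      ‖x - xb‖ ≤ ε₁ → ‖x + d - xb‖ ≤ K * ‖x - xb‖ ^ 2 := by
    refine ⟨(‖A‖ * (2 * m ^ 2 + 2 * m) + m * ‖A‖) / c + 1 / 2, ?_,
      fun x d hx hnd hδe => mainstep A hm hA xb lam hAss c ε₁ hc hε₁1 hcoerc x d hx hnd hδe⟩
    have h1 : 0 ≤ (‖A‖ * (2 * (m:ℝ) ^ 2 + 2 * m) + m * ‖A‖) / c := div_nonneg (by positivity) hc.le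
    linarith
  set C : ℝ := 2 * K + 1 with hC
  have hC0 : 0 < C := by rw [hC]; linarith
  have hC2 : (0:ℝ) < 1 / (2 * C) := by positivity
  refine ⟨min ε₁ (1 / (2 * C)), lt_min hε₁ hC2, C, hC0, ?_⟩
  intro x d hxs hnds hrec hx0
  set ε : ℝ := min ε₁ (1 / (2 * C)) with hεdef
  have hε0 : 0 < ε := lt_min hε₁ hC2
  have hεε₁ : ε ≤ ε₁ := min_le_left _ _
  have hεC : C * ε ≤ 1 / 2 := by
    have h1 : ε ≤ 1 / (2 * C) := min_le_right _ _
    calc C * ε ≤ C * (1 / (2 * C)) := mul_le_mul_of_nonneg_left h1 hC0.le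
      _ = 1 / 2 := by
          rw [mul_one_div, div_eq_div_iff (by linarith : (2:ℝ) * C ≠ 0) (by norm_num : (2:ℝ) ≠ 0)]
          ring
  have step : ∀ k, ‖x k - xb‖ ≤ ε →
      ‖x (k + 1) - xb‖ ≤ C * ‖x k - xb‖ ^ 2 ∧ ‖x (k + 1) - xb‖ ≤ 1 / 2 * ‖x k - xb‖ := by
    intro k hk
    have hyb : ‖x k + d k - xb‖ ≤ K * ‖x k - xb‖ ^ 2 :=
      hstep (x k) (d k) (hxs k) (hnds k) (le_trans hk hεε₁)
    have hδ0 : 0 ≤ ‖x k - xb‖ := norm_nonneg _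
    have hCδ : C * ‖x k - xb‖ ^ 2 ≤ 1 / 2 * ‖x k - xb‖ := by
      have h2 : C * ‖x k - xb‖ ≤ C * ε := mul_le_mul_of_nonneg_left hk hC0.le
      nlinarith [hεC, hδ0]
    have hKC : 2 * K ≤ C := by rw [hC]; linarith
    have h2Kδ : 2 * (K * ‖x k - xb‖ ^ 2) ≤ C * ‖x k - xb‖ ^ 2 := by
      nlinarith [sq_nonneg ‖x k - xb‖]
    have hδ1 : ‖x k - xb‖ ≤ 1 := le_trans hk (le_trans hεε₁ hε₁1)
    have hy1 : (1:ℝ) / 2 ≤ ‖x k + d k‖ := by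
      have h3 := abs_norm_sub_norm_le (x k + d k) xb
      have h4 : ‖xb‖ = 1 := hAss.1
      have h5 : ‖x k + d k - xb‖ ≤ 1 / 2 * ‖x k - xb‖ := by linarith [hCδ, h2Kδ, hyb, hδ0, sq_nonneg ‖x k - xb‖]
      have h6 : ‖x k + d k - xb‖ ≤ 1 / 2 := by nlinarith
      rw [h4] at h3
      cases abs_le.1 h3 with
      | intro hl hr => linarith
    have hyne : ‖x k + d k‖ ≠ 0 := by linarith
    have hnn : ‖x (k + 1) - xb‖ ≤ 2 * ‖x k + d k - xb‖ := by
      have h7 : x (k + 1) - xb = (x (k + 1) - (x k + d k)) + (x k + d k - xb) := by abel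
      have h8 : ‖x (k + 1) - (x k + d k)‖ ≤ ‖x k + d k - xb‖ := by
        rw [hrec k]
        have h9 : ‖x k + d k‖⁻¹ • (x k + d k) - (x k + d k)
            = (‖x k + d k‖⁻¹ - 1) • (x k + d k) := by
          rw [sub_smul, one_smul]
        rw [h9, norm_smul, Real.norm_eq_abs]
        have h10 : |‖x k + d k‖⁻¹ - 1| * ‖x k + d k‖ = |1 - ‖x k + d k‖| := by
          rw [← abs_of_nonneg (norm_nonneg (x k + d k)), ← abs_mul]
          rw [abs_of_nonneg (norm_nonneg (x k + d k))]
          congr 1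
          field_simp
        rw [h10]
        have h11 := abs_norm_sub_norm_le (x k + d k) xb
        rw [hAss.1] at h11
        rw [show |1 - ‖x k + d k‖| = |‖x k + d k‖ - 1| from abs_sub_comm _ _]
        exact h11
      calc ‖x (k + 1) - xb‖ ≤ ‖x (k + 1) - (x k + d k)‖ + ‖x k + d k - xb‖ := by
            rw [h7]; exact norm_add_le _ _
        _ ≤ 2 * ‖x k + d k - xb‖ := by linarith
    constructor
    · calc ‖x (k + 1) - xb‖ ≤ 2 * ‖x k + d k - xb‖ := hnn
        _ ≤ 2 * (K * ‖x k - xb‖ ^ 2) := by linarith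
        _ ≤ C * ‖x k - xb‖ ^ 2 := h2Kδ
    · calc ‖x (k + 1) - xb‖ ≤ 2 * ‖x k + d k - xb‖ := hnn
        _ ≤ 2 * (K * ‖x k - xb‖ ^ 2) := by linarith
        _ ≤ C * ‖x k - xb‖ ^ 2 := h2Kδ
        _ ≤ 1 / 2 * ‖x k - xb‖ := hCδ
  have hball : ∀ k, ‖x k - xb‖ ≤ ε := by
    intro k
    induction k with
    | zero => exact hx0
    | succ k ih =>
        have h1 := (step k ih).2
        have h2 : 0 ≤ ‖x k - xb‖ := norm_nonneg _
        linarith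
  refine ⟨fun k => (step k (hball k)).1, ?_⟩
  have hgeo : ∀ k, ‖x k - xb‖ ≤ (1 / 2 : ℝ) ^ k * ε := by
    intro k
    induction k with
    | zero => rw [pow_zero, one_mul]; exact hx0
    | succ k ih =>
        have h1 := (step k (hball k)).2
        calc ‖x (k + 1) - xb‖ ≤ 1 / 2 * ‖x k - xb‖ := h1
          _ ≤ 1 / 2 * ((1 / 2 : ℝ) ^ k * ε) := by linarith
          _ = (1 / 2 : ℝ) ^ (k + 1) * ε := by ring
  have h0 : Filter.Tendsto (fun k => (1 / 2 : ℝ) ^ k * ε) Filter.atTop (nhds 0) := by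
    have h1 : Filter.Tendsto (fun k => (1 / 2 : ℝ) ^ k) Filter.atTop (nhds 0) := by
      apply tendsto_pow_atTop_nhds_zero_of_lt_one (by norm_num) (by norm_num)
    simpa using h1.mul_const ε
  rw [tendsto_iff_norm_sub_tendsto_zero]
  exact squeeze_zero (fun t => norm_nonneg _) hgeo h0
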